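/- Suppose the wage distribution w is single-peaked on [0,1] with peak x₁ (w'(x)>0 for x∈[0,x₁), w'(x)<0 for x∈(x₁,1]) and concave there: w''(x) ≤ 0 for x∈[0,1], and let 0 ≤ x₀ < x₁. Then the boundary value system ẋ(t)=y(t)/F(t), ẏ(t)=−w'(x(t))·λ₁·e^{−rt}, x(0)=x₀, y(T)=0 on [0,T], where F(t)=2(ξ·λ₁·e^{−rt}+η·e^{−ρt}) and λ₁>0, has exactly one solution (x,y); i.e. there exists a unique extremal. -/

import Mathlib

/-- `F(t) = 2 (ξ λ₁ e^{-rt} + η e^{-ρt})`. -/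
noncomputable def Ffun (ξ lam1 η r ρ : ℝ) (t : ℝ) : ℝ :=
  2 * (ξ * lam1 * Real.exp (-(r * t)) + η * Real.exp (-(ρ * t)))

/-- `w` is single-peaked on `[0,1]` with interior peak `x₁`
(`w' > 0` on `[0,x₁)`, `w' < 0` on `(x₁,1]`) and concave there (`w'' ≤ 0`). -/
def SinglePeakedConcave (w : ℝ → ℝ) (x₁ : ℝ) : Prop :=
  x₁ ∈ Set.Ioo (0:ℝ) 1 ∧
    (∀ s : ℝ, 0 ≤ s → s < x₁ → 0 < deriv w s) ∧
    (∀ s : ℝ, x₁ < s → s ≤ 1 → deriv w s < 0) ∧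
    (∀ s ∈ Set.Icc (0:ℝ) 1, deriv (deriv w) s ≤ 0)

/-- `(x,y)` solves the boundary value system
`ẋ = y/F`, `ẏ = -w'(x) λ₁ e^{-rt}` on `[0,T]`, `x(0) = x₀`, `y(T) = 0`. -/
def ExtremalSol (ρ r η ξ lam1 T x₀ : ℝ) (w : ℝ → ℝ) (x y : ℝ → ℝ) : Prop :=
  x 0 = x₀ ∧ y T = 0 ∧
    (∀ t ∈ Set.Icc (0:ℝ) T, HasDerivAt x (y t / Ffun ξ lam1 η r ρ t) t) ∧
    (∀ t ∈ Set.Icc (0:ℝ) T,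
      HasDerivAt y (-(deriv w (x t) * lam1 * Real.exp (-(r * t)))) t)


open Set

noncomputable def clamp (a b s : ℝ) : ℝ := max a (min b s)

lemma clamp_mem {a b : ℝ} (h : a ≤ b) (s : ℝ) : clamp a b s ∈ Set.Icc a b :=
  ⟨le_max_left _ _, max_le h (min_le_left _ _)⟩

lemma clamp_eq {a b s : ℝ} (h1 : a ≤ s) (h2 : s ≤ b) : clamp a b s = s := by
  rw [clamp, min_eq_right h2, max_eq_right h1]

lemma clamp_lip (a b s t : ℝ) : |clamp a b s - clamp a b t| ≤ |s - t| := by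
  rw [clamp, clamp, max_comm a _, max_comm a _]
  refine le_trans (abs_max_sub_max_le_abs _ _ _) ?_
  refine le_trans (abs_min_sub_min_le_max b s b t) ?_
  simp

lemma contDiff_w_facts {w : ℝ → ℝ} (hw : ContDiff ℝ 2 w) :
    Differentiable ℝ w ∧ Differentiable ℝ (deriv w) ∧ Continuous (deriv (deriv w)) := by
  have h2 : ContDiff ℝ ((1 : WithTop ℕ∞) + 1) w := by
    have : ((1 : WithTop ℕ∞) + 1) = 2 := by norm_num
    rw [this]
    exact hw
  rw [contDiff_succ_iff_deriv] at h2
  obtain ⟨hd, -, h1⟩ := h2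
  rw [contDiff_one_iff_deriv] at h1
  exact ⟨hd, h1.1, h1.2⟩



lemma no_escape (F G : ℝ → ℝ) (x y : ℝ → ℝ) (T c : ℝ) (hT : 0 < T)
    (hF : ∀ t, 0 < F t)
    (hx0 : x 0 ≤ c) (hyT : y T = 0)
    (hxd : ∀ t ∈ Set.Icc (0:ℝ) T, HasDerivAt x (y t / F t) t)
    (hyd : ∀ t ∈ Set.Icc (0:ℝ) T, HasDerivAt y (G t) t)
    (hsign : ∀ t ∈ Set.Icc (0:ℝ) T, c < x t → 0 < G t) :
    ∀ t ∈ Set.Icc (0:ℝ) T, x t ≤ c := by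
  by_contra hcon
  push_neg at hcon
  obtain ⟨t₂, ht₂, ht₂c⟩ := hcon
  have hxc : ContinuousOn x (Set.Icc 0 T) := fun t ht =>
    (hxd t ht).continuousAt.continuousWithinAt
  obtain ⟨ts, hts, hmax⟩ := (isCompact_Icc (a := (0:ℝ)) (b := T)).exists_isMaxOn
    ⟨0, Set.left_mem_Icc.mpr hT.le⟩ hxc
  have hmax' : ∀ s ∈ Set.Icc (0:ℝ) T, x s ≤ x ts := isMaxOn_iff.mp hmax
  have hxts : c < x ts := lt_of_lt_of_le ht₂c (hmax' t₂ ht₂)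
  have hts0 : 0 < ts := by
    rcases lt_or_eq_of_le hts.1 with h | h
    · exact h
    · exfalso; rw [← h] at hxts; linarith
  -- y ts = 0
  have hyts : y ts = 0 := by
    rcases eq_or_lt_of_le hts.2 with h | h
    · rw [h, hyT]
    · have hnhds : Set.Icc (0:ℝ) T ∈ nhds ts := Icc_mem_nhds hts0 h
      have hlm : IsLocalMax x ts := hmax.isLocalMax hnhds
      have h0 : y ts / F ts = 0 := hlm.hasDerivAt_eq_zero (hxd ts hts)
      exact (div_eq_zero_iff.mp h0).resolve_right (hF ts).ne'
  -- find ε ball where x > c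
  have hca : ContinuousAt x ts := (hxd ts hts).continuousAt
  have hpre : x ⁻¹' Set.Ioi c ∈ nhds ts := hca (Ioi_mem_nhds hxts)
  obtain ⟨ε, hε, hball⟩ := Metric.mem_nhds_iff.mp hpre
  set δ := min (ε / 2) ts with hδdef
  have hδpos : 0 < δ := lt_min (by linarith) hts0
  have hδts : δ ≤ ts := min_le_right _ _
  have hIsub : Set.Icc (ts - δ) ts ⊆ Set.Icc 0 T := fun s hs =>
    ⟨by have := hs.1; linarith, le_trans hs.2 hts.2⟩
  have hIgt : ∀ s ∈ Set.Icc (ts - δ) ts, c < x s := by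
    intro s hs
    have : s ∈ Metric.ball ts ε := by
      rw [Metric.mem_ball, Real.dist_eq, abs_sub_lt_iff]
      have h1 : δ ≤ ε / 2 := min_le_left _ _
      constructor <;> [skip; skip] <;> cases' hs with h2 h3 <;> linarith
    exact hball this
  -- y strictly increasing on I
  have hymono : StrictMonoOn y (Set.Icc (ts - δ) ts) := by
    apply strictMonoOn_of_deriv_pos (convex_Icc _ _)
    · exact fun s hs => (hyd s (hIsub hs)).continuousAt.continuousWithinAt
    · intro s hs
      rw [interior_Icc] at hs
      have hsI : s ∈ Set.Icc (ts - δ) ts := ⟨hs.1.le, hs.2.le⟩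
      rw [(hyd s (hIsub hsI)).deriv]
      exact hsign s (hIsub hsI) (hIgt s hsI)
  -- x strictly decreasing on I
  have hxanti : StrictAntiOn x (Set.Icc (ts - δ) ts) := by
    apply strictAntiOn_of_deriv_neg (convex_Icc _ _)
    · exact fun s hs => (hxd s (hIsub hs)).continuousAt.continuousWithinAt
    · intro s hs
      rw [interior_Icc] at hs
      have hsI : s ∈ Set.Icc (ts - δ) ts := ⟨hs.1.le, hs.2.le⟩
      rw [(hxd s (hIsub hsI)).deriv]
      have hys : y s < 0 := by
        have := hymono hsI (Set.right_mem_Icc.mpr (by linarith)) hs.2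
        rwa [hyts] at this
      exact div_neg_of_neg_of_pos hys (hF s)
  have h1 : x ts < x (ts - δ) := hxanti (Set.left_mem_Icc.mpr (by linarith))
    (Set.right_mem_Icc.mpr (by linarith)) (by linarith)
  have h2 : x (ts - δ) ≤ x ts := hmax' _ (hIsub (Set.left_mem_Icc.mpr (by linarith)))
  linarith

lemma no_escape_below (F G : ℝ → ℝ) (x y : ℝ → ℝ) (T c : ℝ) (hT : 0 < T)
    (hF : ∀ t, 0 < F t)
    (hx0 : c ≤ x 0) (hyT : y T = 0)
    (hxd : ∀ t ∈ Set.Icc (0:ℝ) T, HasDerivAt x (y t / F t) t)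
    (hyd : ∀ t ∈ Set.Icc (0:ℝ) T, HasDerivAt y (G t) t)
    (hsign : ∀ t ∈ Set.Icc (0:ℝ) T, x t < c → G t < 0) :
    ∀ t ∈ Set.Icc (0:ℝ) T, c ≤ x t := by
  have := no_escape F (fun t => -G t) (fun t => -x t) (fun t => -y t) T (-c) hT hF
    (by simpa using hx0) (by simpa using hyT)
    (fun t ht => by
      have := (hxd t ht).neg
      show HasDerivAt (fun t => -x t) (-y t / F t) t
      rw [neg_div]
      exact this)
    (fun t ht => (hyd t ht).neg)
    (fun t ht h => by
      have : x t < c := by linarith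
      have := hsign t ht this
      linarith)
  intro t ht
  have h := this t ht
  linarith


lemma sub_sol_eq (F g : ℝ → ℝ) (lam1 r T x₁ : ℝ)
    (hF : ∀ t, 0 < F t) (hlam1 : 0 < lam1) (hT : 0 < T)
    (hganti : AntitoneOn g (Set.Icc 0 1))
    (hgpos : ∀ s, s < x₁ → 0 < g s) (hgneg : ∀ s, x₁ < s → g s < 0)
    (hx₁0 : 0 < x₁) (hx₁1 : x₁ < 1)
    (x y x' y' : ℝ → ℝ)
    (hx0 : x 0 = x' 0) (h0a : 0 ≤ x 0) (h0b : x 0 ≤ x₁)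
    (hyT : y T = 0) (hy'T : y' T = 0)
    (hxd : ∀ t ∈ Set.Icc (0:ℝ) T, HasDerivAt x (y t / F t) t)
    (hyd : ∀ t ∈ Set.Icc (0:ℝ) T,
      HasDerivAt y (-(g (x t) * lam1 * Real.exp (-(r * t)))) t)
    (hx'd : ∀ t ∈ Set.Icc (0:ℝ) T, HasDerivAt x' (y' t / F t) t)
    (hy'd : ∀ t ∈ Set.Icc (0:ℝ) T,
      HasDerivAt y' (-(g (x' t) * lam1 * Real.exp (-(r * t)))) t) :
    ∀ t ∈ Set.Icc (0:ℝ) T, x t = x' t ∧ y t = y' t := by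
  -- a priori bounds for a generic solution
  have bound : ∀ (u v : ℝ → ℝ), u 0 = x 0 → v T = 0 →
      (∀ t ∈ Set.Icc (0:ℝ) T, HasDerivAt u (v t / F t) t) →
      (∀ t ∈ Set.Icc (0:ℝ) T,
        HasDerivAt v (-(g (u t) * lam1 * Real.exp (-(r * t)))) t) →
      ∀ t ∈ Set.Icc (0:ℝ) T, u t ∈ Set.Icc (0:ℝ) 1 := by
    intro u v hu0 hvT hud hvd
    have hup : ∀ t ∈ Set.Icc (0:ℝ) T, u t ≤ x₁ := by
      apply no_escape F _ u v T x₁ hT hF (hu0 ▸ h0b) hvT hud hvd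
      intro t ht hgt
      have h1 : g (u t) < 0 := hgneg _ hgt
      have h2 : 0 < Real.exp (-(r * t)) := Real.exp_pos _
      have h3 : g (u t) * lam1 * Real.exp (-(r * t)) < 0 :=
        mul_neg_of_neg_of_pos (mul_neg_of_neg_of_pos h1 hlam1) h2
      linarith
    have hlo : ∀ t ∈ Set.Icc (0:ℝ) T, 0 ≤ u t := by
      apply no_escape_below F _ u v T 0 hT hF (hu0 ▸ h0a) hvT hud hvd
      intro t ht hlt
      have h1 : 0 < g (u t) := hgpos _ (by linarith)
      have h2 : 0 < Real.exp (-(r * t)) := Real.exp_pos _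
      have h3 : 0 < g (u t) * lam1 * Real.exp (-(r * t)) :=
        mul_pos (mul_pos h1 hlam1) h2
      linarith
    exact fun t ht => ⟨hlo t ht, le_trans (hup t ht) hx₁1.le⟩
  have hxB := bound x y rfl hyT hxd hyd
  have hx'B := bound x' y' hx0.symm hy'T hx'd hy'd
  set φ : ℝ → ℝ := fun t => (x t - x' t) * (y t - y' t) with hφ
  set D : ℝ → ℝ := fun t => (y t / F t - y' t / F t) * (y t - y' t) +
    (x t - x' t) * (-(g (x t) * lam1 * Real.exp (-(r * t))) -
      -(g (x' t) * lam1 * Real.exp (-(r * t)))) with hD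
  have hφd : ∀ t ∈ Set.Icc (0:ℝ) T, HasDerivAt φ (D t) t := fun t ht =>
    ((hxd t ht).sub (hx'd t ht)).mul ((hyd t ht).sub (hy'd t ht))
  have h1 : ∀ t, 0 ≤ (y t / F t - y' t / F t) * (y t - y' t) := by
    intro t
    rw [div_sub_div_same]
    rw [div_mul_eq_mul_div]
    exact div_nonneg (mul_self_nonneg _) (hF t).le
  have h2 : ∀ t ∈ Set.Icc (0:ℝ) T,
      0 ≤ (x t - x' t) * (-(g (x t) * lam1 * Real.exp (-(r * t))) -
        -(g (x' t) * lam1 * Real.exp (-(r * t)))) := by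
    intro t ht
    have hxm := hxB t ht
    have hx'm := hx'B t ht
    have he : 0 < Real.exp (-(r * t)) := Real.exp_pos _
    have key : (x t - x' t) * (-(g (x t) * lam1 * Real.exp (-(r * t))) -
        -(g (x' t) * lam1 * Real.exp (-(r * t)))) =
        ((x' t - x t) * (g (x t) - g (x' t))) * (lam1 * Real.exp (-(r * t))) := by
      ring
    rw [key]
    rcases le_total (x t) (x' t) with h | h
    · have hg := hganti hxm hx'm h
      exact mul_nonneg (mul_nonneg (by linarith) (by linarith)) (by positivity)
    · have hg := hganti hx'm hxm h
      have hp : 0 ≤ (x' t - x t) * (g (x t) - g (x' t)) := by nlinarith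
      exact mul_nonneg hp (by positivity)
  have hD0 : ∀ t ∈ Set.Icc (0:ℝ) T, 0 ≤ D t := fun t ht =>
    add_nonneg (h1 t) (h2 t ht)
  have hφmono : MonotoneOn φ (Set.Icc 0 T) := by
    apply monotoneOn_of_deriv_nonneg (convex_Icc _ _)
    · exact fun t ht => (hφd t ht).continuousAt.continuousWithinAt
    · intro t ht
      rw [interior_Icc] at ht
      exact (hφd t ⟨ht.1.le, ht.2.le⟩).differentiableAt.differentiableWithinAt
    · intro t ht
      rw [interior_Icc] at ht
      rw [(hφd t ⟨ht.1.le, ht.2.le⟩).deriv]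
      exact hD0 t ⟨ht.1.le, ht.2.le⟩
  have hφ0 : φ 0 = 0 := by simp [hφ, hx0]
  have hφT : φ T = 0 := by simp [hφ, hyT, hy'T]
  have hφeq : ∀ t ∈ Set.Icc (0:ℝ) T, φ t = 0 := by
    intro t ht
    have hle : φ t ≤ 0 := hφT ▸ hφmono ht (Set.right_mem_Icc.mpr hT.le) ht.2
    have hge : 0 ≤ φ t := hφ0 ▸ hφmono (Set.left_mem_Icc.mpr hT.le) ht ht.1
    linarith
  have hyeq : ∀ t ∈ Set.Icc (0:ℝ) T, y t = y' t := by
    intro t ht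
    have hud : UniqueDiffWithinAt ℝ (Set.Icc (0:ℝ) T) t := uniqueDiffOn_Icc hT t ht
    have hd1 : HasDerivWithinAt φ (D t) (Set.Icc (0:ℝ) T) t :=
      (hφd t ht).hasDerivWithinAt
    have hd2 : HasDerivWithinAt φ 0 (Set.Icc (0:ℝ) T) t := by
      have : HasDerivWithinAt (fun _ : ℝ => (0:ℝ)) 0 (Set.Icc (0:ℝ) T) t :=
        (hasDerivAt_const t (0:ℝ)).hasDerivWithinAt
      exact this.congr (fun s hs => hφeq s hs) (hφeq t ht)
    have hDt : D t = 0 := by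
      rw [← hd1.derivWithin hud, hd2.derivWithin hud]
    have hfirst : (y t / F t - y' t / F t) * (y t - y' t) = 0 := by
      have hA := h1 t
      have hB := h2 t ht
      rw [hD] at hDt
      dsimp only at hDt
      linarith
    rw [div_sub_div_same, div_mul_eq_mul_div, div_eq_zero_iff] at hfirst
    rcases hfirst with h | h
    · exact sub_eq_zero.mp (mul_self_eq_zero.mp h)
    · exact absurd h (hF t).ne'
  refine fun t ht => ⟨?_, hyeq t ht⟩
  have hψd : ∀ s ∈ Set.Icc (0:ℝ) T,
      HasDerivWithinAt (fun τ => x τ - x' τ)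
        ((fun τ => y τ / F τ - y' τ / F τ) s) (Set.Icc (0:ℝ) T) s :=
    fun s hs => ((hxd s hs).sub (hx'd s hs)).hasDerivWithinAt
  have hbd : ∀ s ∈ Set.Icc (0:ℝ) T, ‖(fun τ => y τ / F τ - y' τ / F τ) s‖ ≤ 0 := by
    intro s hs
    simp [hyeq s hs]
  have heq := (convex_Icc (0:ℝ) T).norm_image_sub_le_of_norm_hasDerivWithin_le
    hψd hbd (Set.left_mem_Icc.mpr hT.le) ht
  simp only [zero_mul, norm_le_zero_iff, sub_eq_zero] at heq
  linarith [heq, hx0.le, hx0.ge]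

noncomputable def Wfun (w : ℝ → ℝ) (s : ℝ) : ℝ := deriv w (clamp (-1) 2 s)

noncomputable def vfield (ξ lam1 η r ρ T B : ℝ) (w : ℝ → ℝ) (t : ℝ) (p : ℝ × ℝ) : ℝ × ℝ :=
  (clamp (-B) B p.2 / Ffun ξ lam1 η r ρ (clamp (-1) (T+1) t),
   -(Wfun w p.1 * lam1 * Real.exp (-(r * clamp (-1) (T+1) t))))

/-- Proposition: for a single-peaked wage distribution with `w'' ≤ 0` on `[0,1]`
and `0 ≤ x₀ < x₁`, the boundary value system `ẋ = y/F`,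
`ẏ = -w'(x) λ₁ e^{-rt}`, `x(0) = x₀`, `y(T) = 0` has exactly one solution on
`[0,T]`: there exists a unique extremal. -/
theorem unique_extremal_single_peak
    (ρ r η ξ lam1 T x₀ x₁ : ℝ)
    (hρ : 0 < ρ) (hr : 0 < r) (hη : 0 < η) (hξ : 0 < ξ)
    (hlam1 : 0 < lam1) (hT : 0 < T)
    (w : ℝ → ℝ) (hw : ContDiff ℝ 2 w) (hwbdd : ∃ M : ℝ, ∀ s : ℝ, |w s| ≤ M)
    (hw0 : ∀ s : ℝ, s ≤ 0 → 0 < deriv w s)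
    (hw1 : ∀ s : ℝ, 1 ≤ s → deriv w s < 0)
    (hpeak : SinglePeakedConcave w x₁)
    (hx₀ : 0 ≤ x₀) (hx₀x₁ : x₀ < x₁) :
    ∃ x y : ℝ → ℝ, ExtremalSol ρ r η ξ lam1 T x₀ w x y ∧
      ∀ x' y' : ℝ → ℝ, ExtremalSol ρ r η ξ lam1 T x₀ w x' y' →
        ∀ t ∈ Set.Icc (0:ℝ) T, x' t = x t ∧ y' t = y t := by
  classical
  obtain ⟨hx₁mem, hpk2, hpk3, hpk4⟩ := hpeak
  have hx₁0 : 0 < x₁ := hx₁mem.1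
  have hx₁1 : x₁ < 1 := hx₁mem.2
  obtain ⟨hwdiff, hdwdiff, hddwcont⟩ := contDiff_w_facts hw
  have hgc : Continuous (deriv w) := hdwdiff.continuous
  have hgpos : ∀ s, s < x₁ → 0 < deriv w s := by
    intro s hs
    rcases le_or_gt s 0 with h | h
    · exact hw0 s h
    · exact hpk2 s h.le hs
  have hgneg : ∀ s, x₁ < s → deriv w s < 0 := by
    intro s hs
    rcases le_or_gt 1 s with h | h
    · exact hw1 s h
    · exact hpk3 s hs h.le
  have hganti : AntitoneOn (deriv w) (Set.Icc 0 1) := by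
    apply antitoneOn_of_deriv_nonpos (convex_Icc _ _) hgc.continuousOn
    · exact fun s _ => (hdwdiff s).differentiableWithinAt
    · intro s hs
      rw [interior_Icc] at hs
      exact hpk4 s ⟨hs.1.le, hs.2.le⟩
  have hFpos : ∀ t, 0 < Ffun ξ lam1 η r ρ t := by
    intro t; unfold Ffun; positivity
  set Fm : ℝ := 2 * η * Real.exp (-(ρ * (T+1))) with hFm
  have hFmpos : 0 < Fm := by rw [hFm]; positivity
  have hFmle : ∀ t : ℝ, t ≤ T + 1 → Fm ≤ Ffun ξ lam1 η r ρ t := by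
    intro t ht
    unfold Ffun
    rw [hFm]
    have h1 : Real.exp (-(ρ * (T+1))) ≤ Real.exp (-(ρ * t)) := by
      apply Real.exp_le_exp.mpr; nlinarith
    nlinarith [Real.exp_pos (-(r * t)), mul_pos hξ hlam1]
  obtain ⟨C₀, hC₀⟩ := (isCompact_Icc (a := (-1:ℝ)) (b := 2)).exists_bound_of_continuousOn
    hgc.continuousOn
  have hC₀0 : 0 ≤ C₀ := le_trans (norm_nonneg _) (hC₀ (-1) (by norm_num))
  obtain ⟨L₀, hL₀⟩ := (isCompact_Icc (a := (-1:ℝ)) (b := 2)).exists_bound_of_continuousOn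
    hddwcont.continuousOn
  have hL₀0 : 0 ≤ L₀ := le_trans (norm_nonneg _) (hL₀ (-1) (by norm_num))
  have hdwlip : ∀ a ∈ Set.Icc (-1:ℝ) 2, ∀ b ∈ Set.Icc (-1:ℝ) 2,
      |deriv w b - deriv w a| ≤ L₀ * |b - a| := by
    intro a ha b hb
    have := (convex_Icc (-1:ℝ) 2).norm_image_sub_le_of_norm_deriv_le
      (fun s _ => hdwdiff s) hL₀ ha hb
    simpa [Real.norm_eq_abs] using this
  -- W facts
  have hWbd : ∀ s, |Wfun w s| ≤ C₀ := fun s => by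
    simpa [Real.norm_eq_abs, Wfun] using hC₀ _ (clamp_mem (by norm_num) s)
  have hWlip : ∀ a b : ℝ, |Wfun w a - Wfun w b| ≤ L₀ * |a - b| := by
    intro a b
    refine le_trans (hdwlip _ (clamp_mem (by norm_num) b) _ (clamp_mem (by norm_num) a)) ?_
    exact mul_le_mul_of_nonneg_left (clamp_lip _ _ _ _) hL₀0
  have hWpos : ∀ s, s < x₁ → 0 < Wfun w s := by
    intro s hs
    apply hgpos
    rw [clamp]
    exact max_lt (by linarith) (lt_of_le_of_lt (min_le_right _ _) hs)
  have hWneg : ∀ s, x₁ < s → Wfun w s < 0 := by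
    intro s hs
    apply hgneg
    rw [clamp]
    refine lt_of_lt_of_le ?_ (le_max_right _ _)
    exact lt_min (by linarith) hs
  have hWeq : ∀ s : ℝ, 0 ≤ s → s ≤ 1 → Wfun w s = deriv w s := by
    intro s h1 h2
    rw [Wfun, clamp_eq (by linarith) (by linarith)]
  -- constants
  set D0 : ℝ := C₀ * lam1 * T with hD0def
  have hD00 : 0 ≤ D0 := by rw [hD0def]; positivity
  set A : ℝ := D0 + 1 with hAdef
  set B : ℝ := A + D0 + 1 with hBdef
  have hA0 : 0 < A := by rw [hAdef]; linarith
  have hB0 : 0 < B := by rw [hBdef]; linarith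
  set Ce : ℝ := C₀ * lam1 * Real.exp r with hCedef
  have hCe0 : 0 ≤ Ce := by rw [hCedef]; positivity
  set Cb : ℝ := max (B / Fm) Ce with hCbdef
  have hCb0 : 0 ≤ Cb := le_trans hCe0 (le_max_right _ _)
  set Kr : ℝ := max (1 / Fm) (L₀ * lam1 * Real.exp r) with hKrdef
  have hKr0 : 0 ≤ Kr := le_trans (by positivity) (le_max_left _ _)
  set K : NNReal := Real.toNNReal Kr with hKdef
  have hKcoe : (K : ℝ) = Kr := Real.coe_toNNReal _ hKr0
  -- time clamp facts
  have hτmem : ∀ t : ℝ, clamp (-1) (T+1) t ∈ Set.Icc (-1:ℝ) (T+1) :=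
    clamp_mem (by linarith)
  have hexpτ : ∀ t : ℝ, Real.exp (-(r * clamp (-1) (T+1) t)) ≤ Real.exp r := by
    intro t
    apply Real.exp_le_exp.mpr
    have := (hτmem t).1
    nlinarith
  have hFτ : ∀ t : ℝ, Fm ≤ Ffun ξ lam1 η r ρ (clamp (-1) (T+1) t) :=
    fun t => hFmle _ (hτmem t).2
  set vf : ℝ → ℝ × ℝ → ℝ × ℝ := vfield ξ lam1 η r ρ T B w with hvf
  -- Lipschitz
  have hvlip : ∀ t, LipschitzWith K (vf t) := by
    intro t
    apply LipschitzWith.of_dist_le_mul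
    intro p q
    rw [hKcoe, hvf, Prod.dist_eq]
    have hsnd : |p.2 - q.2| ≤ dist p q := by
      rw [Prod.dist_eq, Real.dist_eq, Real.dist_eq]; exact le_max_right _ _
    have hfst : |q.1 - p.1| ≤ dist p q := by
      rw [abs_sub_comm, Prod.dist_eq, Real.dist_eq, Real.dist_eq]; exact le_max_left _ _
    apply max_le
    · show dist (vfield ξ lam1 η r ρ T B w t p).1 (vfield ξ lam1 η r ρ T B w t q).1 ≤ _
      rw [vfield, Real.dist_eq]
      calc |clamp (-B) B p.2 / Ffun ξ lam1 η r ρ (clamp (-1) (T+1) t)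
            - clamp (-B) B q.2 / Ffun ξ lam1 η r ρ (clamp (-1) (T+1) t)|
          = |clamp (-B) B p.2 - clamp (-B) B q.2| /
              Ffun ξ lam1 η r ρ (clamp (-1) (T+1) t) := by
            rw [div_sub_div_same, abs_div, abs_of_pos (hFpos _)]
        _ ≤ dist p q / Fm := by
            apply div_le_div₀ dist_nonneg _ hFmpos (hFτ t)
            exact le_trans (clamp_lip _ _ _ _) hsnd
        _ = (1 / Fm) * dist p q := by ring
        _ ≤ Kr * dist p q :=
            mul_le_mul_of_nonneg_right (le_max_left _ _) dist_nonneg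
    · show dist (vfield ξ lam1 η r ρ T B w t p).2 (vfield ξ lam1 η r ρ T B w t q).2 ≤ _
      rw [vfield, Real.dist_eq]
      have hee : (0:ℝ) < Real.exp (-(r * clamp (-1) (T+1) t)) := Real.exp_pos _
      calc |-(Wfun w p.1 * lam1 * Real.exp (-(r * clamp (-1) (T+1) t)))
            - -(Wfun w q.1 * lam1 * Real.exp (-(r * clamp (-1) (T+1) t)))|
          = |Wfun w q.1 - Wfun w p.1| * (lam1 * Real.exp (-(r * clamp (-1) (T+1) t))) := by
            rw [show -(Wfun w p.1 * lam1 * Real.exp (-(r * clamp (-1) (T+1) t)))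
              - -(Wfun w q.1 * lam1 * Real.exp (-(r * clamp (-1) (T+1) t)))
              = (Wfun w q.1 - Wfun w p.1) * (lam1 * Real.exp (-(r * clamp (-1) (T+1) t)))
              from by ring, abs_mul, abs_of_pos (mul_pos hlam1 hee)]
        _ ≤ (L₀ * |q.1 - p.1|) * (lam1 * Real.exp r) := by
            apply mul_le_mul (hWlip _ _) _ (by positivity) (by positivity)
            exact mul_le_mul_of_nonneg_left (hexpτ t) hlam1.le
        _ = (L₀ * lam1 * Real.exp r) * |q.1 - p.1| := by ring
        _ ≤ Kr * dist p q := by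
            apply mul_le_mul (le_max_right _ _) hfst (abs_nonneg _) hKr0
  -- global bound
  have hvbd : ∀ (t : ℝ) (p : ℝ × ℝ), ‖vf t p‖ ≤ Cb := by
    intro t p
    rw [hvf, Prod.norm_def]
    apply max_le
    · show ‖(vfield ξ lam1 η r ρ T B w t p).1‖ ≤ Cb
      rw [vfield]
      refine le_trans ?_ (le_max_left _ _)
      rw [Real.norm_eq_abs, abs_div, abs_of_pos (hFpos _)]
      apply div_le_div₀ hB0.le _ hFmpos (hFτ t)
      have := clamp_mem (show -B ≤ B by linarith) p.2
      rw [abs_le]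
      exact ⟨this.1, this.2⟩
    · show ‖(vfield ξ lam1 η r ρ T B w t p).2‖ ≤ Cb
      rw [vfield]
      refine le_trans ?_ (le_max_right _ _)
      rw [Real.norm_eq_abs, abs_neg, abs_mul, abs_mul, abs_of_pos hlam1,
        abs_of_pos (Real.exp_pos _), hCedef]
      exact mul_le_mul (mul_le_mul (hWbd _) le_rfl hlam1.le hC₀0) (hexpτ _)
        (Real.exp_pos _).le (by positivity)
  -- continuity in t
  have hτcont : Continuous (fun t : ℝ => clamp (-1) (T+1) t) := by
    unfold clamp; exact continuous_const.max (continuous_const.min continuous_id)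
  have hFcont : Continuous (Ffun ξ lam1 η r ρ) := by
    unfold Ffun; fun_prop
  have hvcont : ∀ p : ℝ × ℝ, Continuous (fun t => vf t p) := by
    intro p
    rw [hvf]
    unfold vfield
    apply Continuous.prodMk
    · exact continuous_const.div (hFcont.comp hτcont) (fun t => (hFpos _).ne')
    · exact (continuous_const.mul
        (Real.continuous_exp.comp ((continuous_const.mul hτcont).neg))).neg
  -- Picard-Lindelöf
  have hEx : ∀ α : ℝ, ∃ f : ℝ → ℝ × ℝ, f 0 = (x₀, α) ∧
      ∀ t ∈ Set.Icc (-1:ℝ) (T+1), HasDerivWithinAt f (vf t (f t)) (Set.Icc (-1) (T+1)) t := by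
    intro α
    have hpl : IsPicardLindelof vf (tmin := -1) (tmax := T+1) ⟨0, by constructor <;> linarith⟩
        (x₀, α) (Real.toNNReal (Cb * (T+1))) 0 (Real.toNNReal Cb) K :=
      { lipschitzOnWith := fun t _ => (hvlip t).lipschitzOnWith
        continuousOn := fun p _ => (hvcont p).continuousOn
        norm_le := fun t _ p _ => by rw [Real.coe_toNNReal _ hCb0]; exact hvbd t p
        mul_max_le := by
          show (Cb.toNNReal : ℝ) * max (T + 1 - 0) (0 - -1) ≤ ((Cb * (T+1)).toNNReal : ℝ) - ((0:NNReal):ℝ)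
          rw [Real.coe_toNNReal _ hCb0, Real.coe_toNNReal _ (mul_nonneg hCb0 (by linarith)),
            NNReal.coe_zero, sub_zero, sub_zero]
          exact mul_le_mul_of_nonneg_left (max_le (le_refl (T + 1)) (by linarith : (0:ℝ) - -1 ≤ T + 1)) hCb0 }
    exact hpl.exists_eq_forall_mem_Icc_hasDerivWithinAt₀
  choose sol hsol0 hsolds using hEx
  have hD : ∀ α, ∀ t ∈ Set.Icc (0:ℝ) T, HasDerivAt (sol α) (vf t (sol α t)) t := by
    intro α t ht
    have hmem : t ∈ Set.Icc (-1:ℝ) (T+1) := ⟨by linarith [ht.1], by linarith [ht.2]⟩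
    exact (hsolds α t hmem).hasDerivAt
      (Icc_mem_nhds (by linarith [ht.1]) (by linarith [ht.2]))
  have hclampt : ∀ t ∈ Set.Icc (0:ℝ) T, clamp (-1) (T+1) t = t := fun t ht =>
    clamp_eq (by linarith [ht.1]) (by linarith [ht.2])
  have hxD : ∀ α, ∀ t ∈ Set.Icc (0:ℝ) T,
      HasDerivAt (fun s => (sol α s).1)
        (clamp (-B) B ((sol α t).2) / Ffun ξ lam1 η r ρ t) t := by
    intro α t ht
    have h := (hasFDerivAt_fst (𝕜 := ℝ)).comp_hasDerivAt t (hD α t ht)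
    have h2 : HasDerivAt (fun s => (sol α s).1) ((vf t (sol α t)).1) t := by
      exact h
    rw [hvf] at h2
    unfold vfield at h2
    rwa [hclampt t ht] at h2
  have hyD : ∀ α, ∀ t ∈ Set.Icc (0:ℝ) T,
      HasDerivAt (fun s => (sol α s).2)
        (-(Wfun w ((sol α t).1) * lam1 * Real.exp (-(r * t)))) t := by
    intro α t ht
    have h := (hasFDerivAt_snd (𝕜 := ℝ)).comp_hasDerivAt t (hD α t ht)
    have h2 : HasDerivAt (fun s => (sol α s).2) ((vf t (sol α t)).2) t := by
      exact h
    rw [hvf] at h2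
    unfold vfield at h2
    rwa [hclampt t ht] at h2
  have hy0 : ∀ α : ℝ, (sol α 0).2 = α := fun α => by rw [hsol0 α]
  have hx0' : ∀ α : ℝ, (sol α 0).1 = x₀ := fun α => by rw [hsol0 α]
  have hybd : ∀ α : ℝ, ∀ t ∈ Set.Icc (0:ℝ) T, |(sol α t).2 - α| ≤ D0 := by
    intro α t ht
    have hmv := (convex_Icc (0:ℝ) T).norm_image_sub_le_of_norm_hasDerivWithin_le
      (f' := fun s => -(Wfun w ((sol α s).1) * lam1 * Real.exp (-(r * s))))
      (fun s hs => (hyD α s hs).hasDerivWithinAt)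
      (C := C₀ * lam1) ?_ (Set.left_mem_Icc.mpr hT.le) ht
    · rw [Real.norm_eq_abs, Real.norm_eq_abs, sub_zero, hy0 α] at hmv
      refine le_trans hmv ?_
      rw [hD0def, abs_of_nonneg ht.1]
      have := ht.2
      nlinarith
    · intro s hs
      rw [Real.norm_eq_abs, abs_neg, abs_mul, abs_mul, abs_of_pos hlam1,
        abs_of_pos (Real.exp_pos _)]
      have he1 : Real.exp (-(r * s)) ≤ 1 := by
        apply Real.exp_le_one_iff.mpr
        have := hs.1
        nlinarith
      calc |Wfun w ((sol α s).1)| * lam1 * Real.exp (-(r * s))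
          ≤ C₀ * lam1 * 1 := by
            apply mul_le_mul (mul_le_mul (hWbd _) le_rfl hlam1.le hC₀0) he1
              (Real.exp_pos _).le (by positivity)
        _ = C₀ * lam1 := by ring
  set P : ℝ → ℝ := fun α => (sol α T).2 with hPdef
  have hTIcc : T ∈ Set.Icc (0:ℝ) T := Set.right_mem_Icc.mpr hT.le
  have hPA : 1 ≤ P A := by
    have h := hybd A T hTIcc
    rw [abs_le] at h
    rw [hPdef]
    have := h.1
    rw [hAdef] at *
    linarith [h.1]
  have hPnA : P (-A) ≤ -1 := by
    have h := hybd (-A) T hTIcc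
    rw [abs_le] at h
    rw [hPdef]
    rw [hAdef] at *
    linarith [h.2]
  have hsolcont : ∀ α : ℝ, ContinuousOn (sol α) (Set.Icc 0 T) :=
    fun α t ht => (hD α t ht).continuousAt.continuousWithinAt
  have hPlip : ∀ α β : ℝ, dist (P α) (P β) ≤ Real.exp (Kr * T) * dist α β := by
    intro α β
    have hgron := dist_le_of_trajectories_ODE (v := vf) (K := K) hvlip
      (hsolcont α)
      (fun t ht => (hD α t (Set.Ico_subset_Icc_self ht)).hasDerivWithinAt)
      (hsolcont β)
      (fun t ht => (hD β t (Set.Ico_subset_Icc_self ht)).hasDerivWithinAt)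
      (le_refl (dist (sol α 0) (sol β 0))) T hTIcc
    have hd0 : dist (sol α 0) (sol β 0) = dist α β := by
      rw [hsol0 α, hsol0 β, Prod.dist_eq]
      simp [dist_self, dist_nonneg]
    have hdT : dist (P α) (P β) ≤ dist (sol α T) (sol β T) := by
      rw [hPdef, Prod.dist_eq]
      exact le_max_right _ _
    rw [hd0, sub_zero, hKcoe] at hgron
    calc dist (P α) (P β) ≤ dist (sol α T) (sol β T) := hdT
      _ ≤ dist α β * Real.exp (Kr * T) := hgron
      _ = Real.exp (Kr * T) * dist α β := by ring
  have hPcont : Continuous P := by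
    apply LipschitzWith.continuous (K := Real.toNNReal (Real.exp (Kr * T)))
    apply LipschitzWith.of_dist_le_mul
    intro α β
    rw [Real.coe_toNNReal _ (Real.exp_pos _).le]
    exact hPlip α β
  have hIVT := intermediate_value_Icc (show -A ≤ A by linarith) hPcont.continuousOn
  have h0mem : (0:ℝ) ∈ Set.Icc (P (-A)) (P A) := ⟨by linarith, by linarith⟩
  obtain ⟨αs, hαs, hPαs⟩ := hIVT h0mem
  have hαsA : |αs| ≤ A := abs_le.mpr ⟨hαs.1, hαs.2⟩
  set x : ℝ → ℝ := fun t => (sol αs t).1 with hxdef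
  set y : ℝ → ℝ := fun t => (sol αs t).2 with hydef
  have hyB : ∀ t ∈ Set.Icc (0:ℝ) T, -B ≤ y t ∧ y t ≤ B := by
    intro t ht
    have h := hybd αs t ht
    rw [abs_le] at h
    rw [abs_le] at hαsA
    rw [hydef, hBdef]
    constructor <;> [linarith [h.1, hαsA.1]; linarith [h.2, hαsA.2]]
  have hxeq : ∀ t ∈ Set.Icc (0:ℝ) T, HasDerivAt x (y t / Ffun ξ lam1 η r ρ t) t := by
    intro t ht
    have h := hxD αs t ht
    rwa [clamp_eq (hyB t ht).1 (hyB t ht).2] at h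
  have hyeq : ∀ t ∈ Set.Icc (0:ℝ) T,
      HasDerivAt y (-(Wfun w (x t) * lam1 * Real.exp (-(r * t)))) t :=
    fun t ht => hyD αs t ht
  have hx0 : x 0 = x₀ := hx0' αs
  have hyT : y T = 0 := hPαs
  -- a priori bounds
  have hxub : ∀ t ∈ Set.Icc (0:ℝ) T, x t ≤ x₁ := by
    apply no_escape (Ffun ξ lam1 η r ρ) _ x y T x₁ hT hFpos
      (by rw [hx0]; exact hx₀x₁.le) hyT hxeq hyeq
    intro t ht hgt
    have h1 : Wfun w (x t) < 0 := hWneg _ hgt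
    have h2 : 0 < Real.exp (-(r * t)) := Real.exp_pos _
    have h3 : Wfun w (x t) * lam1 * Real.exp (-(r * t)) < 0 :=
      mul_neg_of_neg_of_pos (mul_neg_of_neg_of_pos h1 hlam1) h2
    linarith
  have hxlb : ∀ t ∈ Set.Icc (0:ℝ) T, 0 ≤ x t := by
    apply no_escape_below (Ffun ξ lam1 η r ρ) _ x y T 0 hT hFpos
      (by rw [hx0]; exact hx₀) hyT hxeq hyeq
    intro t ht hlt
    have h1 : 0 < Wfun w (x t) := hWpos _ (by linarith)
    have h2 : 0 < Real.exp (-(r * t)) := Real.exp_pos _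
    have h3 : 0 < Wfun w (x t) * lam1 * Real.exp (-(r * t)) :=
      mul_pos (mul_pos h1 hlam1) h2
    linarith
  have hyeq' : ∀ t ∈ Set.Icc (0:ℝ) T,
      HasDerivAt y (-(deriv w (x t) * lam1 * Real.exp (-(r * t)))) t := by
    intro t ht
    have h := hyeq t ht
    rwa [hWeq _ (hxlb t ht) (le_trans (hxub t ht) hx₁1.le)] at h
  refine ⟨x, y, ⟨hx0, hyT, hxeq, hyeq'⟩, ?_⟩
  rintro x' y' ⟨hx'0, hy'T, hx'd, hy'd⟩
  exact sub_sol_eq (Ffun ξ lam1 η r ρ) (deriv w) lam1 r T x₁ hFpos hlam1 hT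
    hganti hgpos hgneg hx₁0 hx₁1 x' y' x y
    (by rw [hx'0, hx0]) (by rw [hx'0]; exact hx₀) (by rw [hx'0]; exact hx₀x₁.le)
    hy'T hyT hx'd hy'd hxeq hyeq'
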